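/- arXiv:2506.00323 — 3 statements merged into one kernel-verified Lean document; each statement's English description precedes it below -/
import Mathlib

section
/- The polynomial xy + g(z^2,t), where g(z^2,t) ∈ C[z,t] is a polynomial in z^2 and t whose weighted order with respect to wt(z,t) = (1,2) is 6 and which contains the monomial t^3 with nonzero coefficient, has irreducible weighted-degree-6 part x·y + g_{wt=6}(z^2,t) when x,y are given weights 5 and 1 respectively; i.e., the polynomial x y + g_{wt=6}(z^2,t) is irreducible in C[x,y,z,t]. -/
open MvPolynomial

/-- A primitive polynomial of `natDegree` 1 over a domain is irreducible. -/
private lemma aux_irred_deg_one {R : Type*} [CommRing R] [IsDomain R]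
    {p : Polynomial R} (h1 : p.natDegree = 1) (hp : p.IsPrimitive) :
    Irreducible p := by
  constructor
  · intro hu
    have := Polynomial.natDegree_eq_zero_of_isUnit hu
    omega
  · intro a b hab
    have hp0 : p ≠ 0 := fun h => by simp [h] at h1
    have ha0 : a ≠ 0 := fun h => hp0 (by simp [hab, h])
    have hb0 : b ≠ 0 := fun h => hp0 (by simp [hab, h])
    have hd : a.natDegree + b.natDegree = 1 := by
      rw [← Polynomial.natDegree_mul ha0 hb0, ← hab, h1]
    rcases Nat.eq_zero_or_pos a.natDegree with h | h
    · left
      have ha : a = Polynomial.C (a.coeff 0) := Polynomial.eq_C_of_natDegree_eq_zero h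
      have : Polynomial.C (a.coeff 0) ∣ p := ⟨b, by rw [← ha, hab]⟩
      have := hp _ this
      rw [ha]
      exact this.map Polynomial.C
    · right
      have hb : b.natDegree = 0 := by omega
      have hbc : b = Polynomial.C (b.coeff 0) := Polynomial.eq_C_of_natDegree_eq_zero hb
      have : Polynomial.C (b.coeff 0) ∣ p := ⟨a, by rw [← hbc, hab]; ring⟩
      have := hp _ this
      rw [hbc]
      exact this.map Polynomial.C

/-- if `g` is a polynomial in `z², t` (variables `z = X 2`, `t = X 3`),
quasi-homogeneous of weighted degree exactly `6` with respect to `wt(z,t) = (1,2)`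
(so `g` is the weighted-degree-6 part `g_{wt=6}` of a polynomial of weighted order 6),
and the monomial `t³` appears in `g` with nonzero coefficient, then
`x·y + g` is irreducible in `ℂ[x,y,z,t]`. -/
theorem irreducible_xy_add_gwt6
    (g : MvPolynomial (Fin 4) ℂ)
    (hvars : ∀ d ∈ g.support, d 0 = 0 ∧ d 1 = 0 ∧ Even (d 2))
    (hdeg : ∀ d ∈ g.support, d 2 + 2 * d 3 = 6)
    (ht3 : coeff (Finsupp.single 3 3) g ≠ 0) :
    Irreducible (X 0 * X 1 + g : MvPolynomial (Fin 4) ℂ) := by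
  classical
  set e := finSuccEquiv ℂ 3 with he
  set g0 : MvPolynomial (Fin 3) ℂ := (e g).coeff 0 with hg0def
  -- g has no occurrence of variable 0, so e g is constant
  have hdeg0 : degreeOf 0 g = 0 := by
    rw [degreeOf_eq_sup]
    apply (Finset.sup_eq_bot_iff _ _).mpr
    intro d hd
    exact (hvars d hd).1
  have hconst : e g = Polynomial.C g0 := by
    apply Polynomial.eq_C_of_natDegree_eq_zero
    rw [natDegree_finSuccEquiv, hdeg0]
  -- coefficients of g0
  have hcoe : ∀ m : Fin 3 →₀ ℕ, coeff m g0 = coeff (m.cons 0) g := fun m =>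
    finSuccEquiv_coeff_coeff m g 0
  -- g0 has no occurrence of variable 0
  have hsupp0 : ∀ m ∈ g0.support, m 0 = 0 := by
    intro m hm
    rw [mem_support_iff, hcoe] at hm
    have h1 := (hvars _ (mem_support_iff.mpr hm)).2.1
    rwa [show ((1 : Fin 4)) = Fin.succ 0 from rfl, Finsupp.cons_succ] at h1
  -- g0 ≠ 0
  have hkey : (Finsupp.single 2 3 : Fin 3 →₀ ℕ).cons 0 = Finsupp.single (3 : Fin 4) 3 := by
    ext i
    refine Fin.cases ?_ (fun j => ?_) i
    · simp only [Finsupp.cons_zero]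
      simp [Finsupp.single_apply]
    · rw [Finsupp.cons_succ]
      fin_cases j <;> simp [Finsupp.single_apply] <;> decide
  have hg0ne : g0 ≠ 0 := by
    intro h
    apply ht3
    rw [← hkey, ← hcoe, h, coeff_zero]
  -- the substitution killing variable 0 fixes g0
  set σ : MvPolynomial (Fin 3) ℂ →ₐ[ℂ] MvPolynomial (Fin 3) ℂ :=
    aeval (fun i : Fin 3 => if i = 0 then 0 else X i) with hσ
  have hσg0 : σ g0 = g0 := by
    conv_lhs => rw [g0.as_sum]
    conv_rhs => rw [g0.as_sum]
    rw [map_sum]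
    apply Finset.sum_congr rfl
    intro m hm
    rw [aeval_monomial, monomial_eq]
    congr 1
    apply Finsupp.prod_congr
    intro i hi
    have : i ≠ 0 := by
      intro h
      rw [← h] at hsupp0
      exact (Finsupp.mem_support_iff.mp hi) (hsupp0 m hm)
    simp [this]
  have hX0σ : σ (X 0) = 0 := by simp [hσ]
  have hnotdvd : ¬ (X 0 : MvPolynomial (Fin 3) ℂ) ∣ g0 := by
    rintro ⟨h, hh⟩
    apply hg0ne
    conv_lhs => rw [← hσg0, hh]
    rw [map_mul, hX0σ, zero_mul]
  -- X 0 is prime in MvPolynomial (Fin 3) ℂ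
  have hXprime : Prime (X 0 : MvPolynomial (Fin 3) ℂ) := by
    have := (MulEquiv.prime_iff
      (finSuccEquiv ℂ 2).toRingEquiv.toMulEquiv
      (p := (X 0 : MvPolynomial (Fin 3) ℂ)))
    rw [← this]
    show Prime (finSuccEquiv ℂ 2 (X 0))
    rw [finSuccEquiv_X_zero]
    exact Polynomial.prime_X
  -- compute the image of the polynomial under e
  have himg : e (X 0 * X 1 + g) =
      Polynomial.C (X 0) * Polynomial.X + Polynomial.C g0 := by
    rw [map_add, map_mul, hconst]
    rw [show (X 1 : MvPolynomial (Fin 4) ℂ) = X (Fin.succ 0) from rfl]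
    rw [finSuccEquiv_X_zero, finSuccEquiv_X_succ]
    ring
  -- irreducibility of the image
  have hirr : Irreducible (e (X 0 * X 1 + g)) := by
    rw [himg]
    apply aux_irred_deg_one
    · exact Polynomial.natDegree_linear (X_ne_zero 0)
    · intro r hr
      rw [Polynomial.C_dvd_iff_dvd_coeff] at hr
      have h1 : r ∣ X 0 := by simpa using hr 1
      have h0 : r ∣ g0 := by simpa using hr 0
      obtain ⟨c, hc⟩ := h1
      rcases hXprime.irreducible.isUnit_or_isUnit hc with h | h
      · exact h
      · exfalso
        apply hnotdvd
        obtain ⟨u, rfl⟩ := h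
        have hXr : (X 0 : MvPolynomial (Fin 3) ℂ) ∣ r := by
          refine ⟨(↑u⁻¹ : MvPolynomial (Fin 3) ℂ), ?_⟩
          rw [hc, mul_assoc, Units.mul_inv, mul_one]
        exact hXr.trans h0
  exact (MulEquiv.irreducible_iff e).mp hirr
end

section
/- Let X be the hypersurface in P(1,1,1,2,3) with coordinates (u,y,z,t,v) of weights (1,1,1,2,3), defined by a quasi-homogeneous polynomial of degree 7 of the form F = v^2 u + h(u,y,z,t,v) where h ∈ (u,y,t)^2 (the square of the ideal generated by u,y,t). Then along the curve C = (u = y = t = 0) ⊂ P(1,1,1,2,3), the point p_z = (0:0:1:0:0) is the unique point of C ∩ X at which X fails to be quasismooth. -/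
open MvPolynomial

/-- let `X = (F = 0) ⊂ ℙ(1,1,1,2,3)` with coordinates
`u,y,z,t,v = X 0, X 1, X 2, X 3, X 4` of weights `1,1,1,2,3`, where `F` is
quasi-homogeneous of degree `7` of the form `F = v²u + h` with
`h ∈ (u,y,t)²`.  Then the curve `C = (u = y = t = 0)` is contained in `X`,
and along `C` the point `p_z = (0:0:1:0:0)` (i.e. the points of the punctured
cone over `C` with `v = 0`) is the unique point at which `X` fails to be
quasismooth: all partial derivatives of `F` vanish at a point of the punctured
cone over `C` if and only if the `v`-coordinate vanishes there. -/
theorem pz_unique_non_quasismooth_point_on_curve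
    (F h : MvPolynomial (Fin 5) ℂ)
    (hdeg : ∀ d ∈ F.support, d 0 + d 1 + d 2 + 2 * d 3 + 3 * d 4 = 7)
    (hF : F = X 4 ^ 2 * X 0 + h)
    (hh : h ∈ (Ideal.span ({X 0, X 1, X 3} : Set (MvPolynomial (Fin 5) ℂ))) ^ 2) :
    ∀ q : Fin 5 → ℂ, q ≠ 0 → q 0 = 0 → q 1 = 0 → q 3 = 0 →
      eval q F = 0 ∧
      ((∀ i : Fin 5, eval q (pderiv i F) = 0) ↔ q 4 = 0) := by
  intro q hq h0 h1 h3
  set I : Ideal (MvPolynomial (Fin 5) ℂ) := Ideal.span {X 0, X 1, X 3} with hI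
  have hIeval : ∀ p ∈ I, eval q p = 0 := by
    intro p hp
    have hker : I ≤ RingHom.ker (eval q) := by
      rw [hI, Ideal.span_le]
      rintro p (rfl | rfl | rfl) <;> simp [RingHom.mem_ker, h0, h1, h3]
    exact hker hp
  have hderiv : ∀ (i : Fin 5) (p : MvPolynomial (Fin 5) ℂ), p ∈ I ^ 2 → pderiv i p ∈ I := by
    intro i p hp
    rw [sq] at hp
    refine Submodule.mul_induction_on hp ?_ ?_
    · intro a ha b hb
      rw [pderiv_mul]
      exact I.add_mem (I.mul_mem_left _ hb) (I.mul_mem_right _ ha)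
    · intro x y hx hy
      rw [map_add]; exact I.add_mem hx hy
  have hhI : h ∈ I := Ideal.pow_le_self (by norm_num) hh
  refine ⟨?_, ?_, ?_⟩
  · rw [hF]; simp [hIeval h hhI, h0]
  · intro hall
    have h4 := hall 0
    rw [hF, map_add, map_add, hIeval _ (hderiv 0 h hh)] at h4
    simp [pderiv_mul, pderiv_X, h0] at h4
    exact h4
  · intro h4 i
    rw [hF, map_add, map_add, hIeval _ (hderiv i h hh), add_zero]
    simp [pderiv_mul, h0, h4]
end

section
/- Let X ⊂ P(1,2,3,4,7,11) be a quasismooth complete intersection of type (12,14) with coordinates x,y,z,t,v,w. If the monomial v^2 does not appear in the degree-14 defining polynomial F_2, then the point p_v = (0:0:0:0:1:0) lies on X and X is not quasismooth at p_v. Hence v^2 ∈ F_2 for quasismooth X. -/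
open MvPolynomial

lemma aux_eval_zero (q : Fin 6 → ℂ) (hq : ∀ i : Fin 6, i ≠ 4 → q i = 0)
    (P : MvPolynomial (Fin 6) ℂ)
    (h : ∀ m ∈ P.support, ∃ j : Fin 6, j ≠ 4 ∧ m j ≠ 0) : eval q P = 0 := by
  conv_lhs => rw [P.as_sum]
  rw [map_sum]
  refine Finset.sum_eq_zero fun m hm => ?_
  obtain ⟨j, hj4, hjm⟩ := h m hm
  rw [eval_monomial]
  have : (m.prod fun n e => q n ^ e) = 0 := by
    refine Finset.prod_eq_zero (Finsupp.mem_support_iff.2 hjm) ?_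
    simp [hq j hj4, zero_pow hjm]
  rw [this, mul_zero]

lemma aux_pderiv_zero (q : Fin 6 → ℂ) (hq : ∀ i : Fin 6, i ≠ 4 → q i = 0)
    (F1 : MvPolynomial (Fin 6) ℂ)
    (h1 : ∀ d ∈ F1.support,
      d 0 + 2 * d 1 + 3 * d 2 + 4 * d 3 + 7 * d 4 + 11 * d 5 = 12)
    (i : Fin 6) : eval q (pderiv i F1) = 0 := by
  conv_lhs => rw [F1.as_sum]
  rw [map_sum, map_sum]
  refine Finset.sum_eq_zero fun s hs => ?_
  rw [pderiv_monomial, eval_monomial]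
  by_cases hsi : s i = 0
  · simp [hsi]
  · suffices hprod : ((s - Finsupp.single i 1).prod fun n e => q n ^ e) = 0 by
      rw [hprod, mul_zero]
    have hex : ∃ j : Fin 6, j ≠ 4 ∧ (s - Finsupp.single i 1 : Fin 6 →₀ ℕ) j ≠ 0 := by
      by_contra hno
      push_neg at hno
      have hj : ∀ j : Fin 6, j ≠ 4 → s j ≤ (Finsupp.single i 1) j := by
        intro j hj4
        have := hno j hj4
        rw [Finsupp.tsub_apply] at this
        omega
      have hw := h1 s hs
      have e0 := hj 0 (by decide)
      have e1 := hj 1 (by decide)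
      have e2 := hj 2 (by decide)
      have e3 := hj 3 (by decide)
      have e5 := hj 5 (by decide)
      fin_cases i <;> simp [Finsupp.single_apply] at e0 e1 e2 e3 e5 hsi <;> omega
    obtain ⟨j, hj4, hjm⟩ := hex
    have hmem : j ∈ (s - Finsupp.single i 1).support := Finsupp.mem_support_iff.2 hjm
    refine Finset.prod_eq_zero hmem ?_
    have hq0 : q j = 0 := hq j hj4
    simp only [hq0]
    exact zero_pow hjm

/-- let `X ⊂ ℙ(1,2,3,4,7,11)` (coordinates `x,y,z,t,v,w = X 0,…,X 5`)
be a complete intersection of quasi-homogeneous polynomials `F₁, F₂` of degrees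
`12, 14`.  If the monomial `v²` does not appear in `F₂`, then `p_v = (0:0:0:0:1:0)`
lies on `X` and `X` is not quasismooth at `p_v`: at every point of the punctured
cone over `p_v` every `2×2` minor of the Jacobian of `(F₁,F₂)` vanishes.
(Hence `v² ∈ F₂` for quasismooth `X`.) -/
theorem not_quasismooth_at_pv_of_no_v_sq
    (F1 F2 : MvPolynomial (Fin 6) ℂ)
    (h1 : ∀ d ∈ F1.support,
      d 0 + 2 * d 1 + 3 * d 2 + 4 * d 3 + 7 * d 4 + 11 * d 5 = 12)
    (h2 : ∀ d ∈ F2.support,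
      d 0 + 2 * d 1 + 3 * d 2 + 4 * d 3 + 7 * d 4 + 11 * d 5 = 14)
    (hv2 : coeff (Finsupp.single 4 2) F2 = 0) :
    (∀ q : Fin 6 → ℂ, (∀ i : Fin 6, i ≠ 4 → q i = 0) →
      eval q F1 = 0 ∧ eval q F2 = 0) ∧
    (∀ q : Fin 6 → ℂ, (∀ i : Fin 6, i ≠ 4 → q i = 0) → q 4 ≠ 0 →
      ∀ i j : Fin 6,
        eval q (pderiv i F1) * eval q (pderiv j F2)
          - eval q (pderiv j F1) * eval q (pderiv i F2) = 0) := by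
  constructor
  · intro q hq
    constructor
    · refine aux_eval_zero q hq F1 fun m hm => ?_
      by_contra hno
      push_neg at hno
      have hw := h1 m hm
      have e0 := hno 0 (by decide)
      have e1 := hno 1 (by decide)
      have e2 := hno 2 (by decide)
      have e3 := hno 3 (by decide)
      have e5 := hno 5 (by decide)
      omega
    · refine aux_eval_zero q hq F2 fun m hm => ?_
      by_contra hno
      push_neg at hno
      have hw := h2 m hm
      have e0 := hno 0 (by decide)
      have e1 := hno 1 (by decide)
      have e2 := hno 2 (by decide)
      have e3 := hno 3 (by decide)
      have e5 := hno 5 (by decide)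
      have h4 : m 4 = 2 := by omega
      have hms : m = Finsupp.single 4 2 := by
        ext a
        fin_cases a <;> simp [Finsupp.single_apply, e0, e1, e2, e3, h4, e5]
      rw [MvPolynomial.mem_support_iff, hms] at hm
      exact hm hv2
  · intro q hq _ i j
    rw [aux_pderiv_zero q hq F1 h1 i, aux_pderiv_zero q hq F1 h1 j]
    ring
end
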